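/- arXiv:1804.07108 — 2 statements merged into one kernel-verified Lean document; each statement's English description precedes it below -/
import Mathlib

section
/- For every integer k ≥ 1, define centres c_i = 2i/(k+1) − 1 for 1 ≤ i ≤ k (except when k is odd, where c_{(k+1)/2} = 1/(k+1)) and intervals [α_i, β_i] = [c_i − 1/(8(k+1)²), c_i + 1/(8(k+1)²)]. Then for all a_i ∈ [α_i, β_i]: (1) |a_i| ≤ 1; (2) |Σ_{j=1}^k a_j| ≤ 1; (3) β_i − α_i ≥ 1/(4(k+1)²); (4) |a_i − a_j| ≥ 1/(4(k+1)²) for i ≠ j; (5) |a_i + Σ_{j=1}^k a_j| ≥ 1/(4(k+1)²); (6) the number of indices j with a_j ≥ 1/4 is at least (k+1)/5. -/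
theorem stmt_4 (k : ℕ) (hk : 1 ≤ k)
    (c : Fin k → ℝ)
    (hc : ∀ i : Fin k,
      c i = if Odd k ∧ (i : ℕ) + 1 = (k + 1) / 2
            then 1 / ((k : ℝ) + 1)
            else 2 * ((i : ℕ) + 1) / ((k : ℝ) + 1) - 1)
    (α β : Fin k → ℝ)
    (hα : ∀ i, α i = c i - 1 / (8 * ((k : ℝ) + 1) ^ 2))
    (hβ : ∀ i, β i = c i + 1 / (8 * ((k : ℝ) + 1) ^ 2))
    (a : Fin k → ℝ) (ha : ∀ i, a i ∈ Set.Icc (α i) (β i)) :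
    (∀ i, |a i| ≤ 1) ∧
    |∑ j, a j| ≤ 1 ∧
    (∀ i, 1 / (4 * ((k : ℝ) + 1) ^ 2) ≤ β i - α i) ∧
    (∀ i j, i ≠ j → 1 / (4 * ((k : ℝ) + 1) ^ 2) ≤ |a i - a j|) ∧
    (∀ i, 1 / (4 * ((k : ℝ) + 1) ^ 2) ≤ |a i + ∑ j, a j|) ∧
    ((k : ℝ) + 1) / 5 ≤ ({j | 1 / 4 ≤ a j} : Set (Fin k)).ncard := by
  have hk0 : (0:ℝ) < (k : ℝ) + 1 := by positivity
  set u : ℝ := ((k:ℝ)+1)⁻¹ with hu_def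
  have hu0 : 0 < u := by positivity
  have hu1 : ((k:ℝ)+1) * u = 1 := mul_inv_cancel₀ (ne_of_gt hk0)
  have hkR : (1:ℝ) ≤ (k:ℝ) := by exact_mod_cast hk
  have hu2 : u ≤ 1/2 := by nlinarith [mul_nonneg (sub_nonneg.mpr hkR) hu0.le]
  have hε_eq : 1 / (8*((k:ℝ)+1)^2) = u^2/8 := by
    rw [hu_def]; field_simp
  have hq_eq : 1 / (4*((k:ℝ)+1)^2) = u^2/4 := by
    rw [hu_def]; field_simp
  set N : Fin k → ℤ := fun i => if Odd k ∧ (i:ℕ) + 1 = (k+1)/2 then 1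
    else 2*((i:ℕ)+1) - (k+1) with hN_def
  have hcN : ∀ i, c i = (N i : ℝ) * u := by
    intro i
    rw [hc i]
    simp only [hN_def]
    by_cases h : Odd k ∧ (i:ℕ)+1 = (k+1)/2
    · rw [if_pos h, if_pos h, one_div, Int.cast_one, one_mul, hu_def]
    · rw [if_neg h, if_neg h]
      push_cast
      rw [div_eq_mul_inv, ← hu_def]
      linear_combination hu1
  have haε : ∀ i, |a i - c i| ≤ u^2/8 := by
    intro i
    obtain ⟨h1, h2⟩ := ha i
    rw [hα i, hε_eq] at h1
    rw [hβ i, hε_eq] at h2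
    rw [abs_le]; constructor <;> linarith
  have hN_bound : ∀ i, |N i| ≤ (k : ℤ) := by
    intro i
    have hik := i.isLt
    simp only [hN_def]
    split_ifs with h
    · simp; omega
    · rw [abs_le]; omega
  have hgauss : ∀ n : ℕ, 2 * ∑ i ∈ Finset.range n, ((i:ℤ)+1) = n*(n+1) := by
    intro n
    induction n with
    | zero => simp
    | succ n ih =>
      rw [Finset.sum_range_succ]
      push_cast at ih ⊢
      linear_combination ih
  have hSN : (∑ i, N i) = (if Odd k then (1:ℤ) else 0) := by
    have hsplit : ∀ i : Fin k, N i = (2*((i:ℕ)+1) - (k+1) : ℤ) +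
        (if Odd k ∧ (i:ℕ)+1 = (k+1)/2 then (1 - (2*((i:ℕ)+1) - (k+1)) : ℤ) else 0) := by
      intro i
      simp only [hN_def]
      split_ifs with h
      · ring
      · ring
    rw [Finset.sum_congr rfl (fun i _ => hsplit i), Finset.sum_add_distrib]
    have h1 : ∑ i : Fin k, (2*(((i:ℕ):ℤ)+1) - (k+1)) = 0 := by
      rw [Fin.sum_univ_eq_sum_range (fun i => 2*((i:ℤ)+1) - (k+1))]
      rw [Finset.sum_sub_distrib, Finset.sum_const, Finset.card_range, ← Finset.mul_sum,
        nsmul_eq_mul]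
      have := hgauss k
      linear_combination this
    rw [h1, zero_add]
    by_cases hodd : Odd k
    · have hk2 : k % 2 = 1 := Nat.odd_iff.mp hodd
      set m := (k+1)/2 with hm_def
      have hm : 2 * m = k + 1 := by omega
      have hm1 : m - 1 < k := by omega
      set i₀ : Fin k := ⟨m-1, hm1⟩ with hi₀
      have hPiff : ∀ i : Fin k, (Odd k ∧ (i:ℕ)+1 = m) ↔ i = i₀ := by
        intro i
        constructor
        · rintro ⟨-, h⟩
          apply Fin.ext
          simp only [hi₀]
          omega
        · rintro rfl
          refine ⟨hodd, ?_⟩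
          simp only [hi₀]
          omega
      rw [Finset.sum_congr rfl (fun i _ => by rw [if_congr (hPiff i) rfl rfl])]
      rw [Finset.sum_ite_eq' Finset.univ i₀ (fun i => (1 - (2*((i:ℕ)+1) - (k+1)) : ℤ))]
      rw [if_pos (Finset.mem_univ i₀), if_pos hodd]
      simp only [hi₀]
      omega
    · rw [if_neg hodd]
      rw [Finset.sum_eq_zero]
      intro i _
      rw [if_neg (fun h => hodd h.1)]
  have hSc : ∑ j, c j = ((if Odd k then (1:ℤ) else 0) : ℝ) * u := by
    rw [Finset.sum_congr rfl (fun i _ => hcN i), ← Finset.sum_mul, ← Int.cast_sum, hSN]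
    split_ifs <;> simp
  have hsum_err : |∑ j, a j - ∑ j, c j| ≤ (k:ℝ) * (u^2/8) := by
    rw [← Finset.sum_sub_distrib]
    calc |∑ j, (a j - c j)| ≤ ∑ j, |a j - c j| := Finset.abs_sum_le_sum_abs _ _
      _ ≤ ∑ _j : Fin k, (u^2/8) := Finset.sum_le_sum (fun i _ => haε i)
      _ = (k:ℝ) * (u^2/8) := by
          rw [Finset.sum_const, Finset.card_univ, Fintype.card_fin, nsmul_eq_mul]
  have hScabs : |∑ j, c j| ≤ u := by
    rw [hSc]
    split_ifs
    · rw [Int.cast_one, one_mul, abs_of_pos hu0]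
    · simp [hu0.le]
  have hker : (k:ℝ)*u^2 = u - u^2 := by linear_combination u * hu1
  have husq : u*u ≤ u*(1/2) := mul_le_mul_of_nonneg_left hu2 hu0.le
  have hsq : u^2 ≤ u/2 := by rw [sq]; linarith
  have part1 : ∀ i, |a i| ≤ 1 := by
    intro i
    have h := haε i
    have hNb : |(N i : ℝ)| ≤ (k:ℝ) := by exact_mod_cast hN_bound i
    have hci : |c i| ≤ (k:ℝ) * u := by
      rw [hcN i, abs_mul, abs_of_pos hu0]
      exact mul_le_mul_of_nonneg_right hNb hu0.le
    have e : c i + (a i - c i) = a i := by ring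
    have htri : |a i| ≤ |c i| + |a i - c i| := by
      calc |a i| = |c i + (a i - c i)| := by rw [e]
        _ ≤ |c i| + |a i - c i| := abs_add_le _ _
    linarith [htri, hci, h, hu1, hsq, hu0.le]
  have part2 : |∑ j, a j| ≤ 1 := by
    have e : ∑ j, c j + (∑ j, a j - ∑ j, c j) = ∑ j, a j := by ring
    have htri : |∑ j, a j| ≤ |∑ j, c j| + |∑ j, a j - ∑ j, c j| := by
      calc |∑ j, a j| = |∑ j, c j + (∑ j, a j - ∑ j, c j)| := by rw [e]
        _ ≤ _ := abs_add_le _ _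
    linarith [htri, hScabs, hsum_err, hker, sq_nonneg u, hu2]
  have part3 : ∀ i : Fin k, 1/(4*((k:ℝ)+1)^2) ≤ β i - α i := by
    intro i
    rw [hq_eq, hβ i, hα i, hε_eq]
    linarith
  have part4 : ∀ i j, i ≠ j → 1/(4*((k:ℝ)+1)^2) ≤ |a i - a j| := by
    intro i j hij
    have hvij : (i:ℕ) ≠ (j:ℕ) := fun h => hij (Fin.ext h)
    have hNij : N i ≠ N j := by
      simp only [hN_def]
      split_ifs with h1 h2 h2
      · intro _
        obtain ⟨-, e1⟩ := h1
        obtain ⟨-, e2⟩ := h2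
        exact hvij (by omega)
      · obtain ⟨ho, e1⟩ := h1
        have hk2 := Nat.odd_iff.mp ho
        omega
      · obtain ⟨ho, e2⟩ := h2
        have hk2 := Nat.odd_iff.mp ho
        omega
      · omega
    have habs1 : (1:ℝ) ≤ |(N i:ℝ) - (N j:ℝ)| := by
      have h2 : (1:ℤ) ≤ |N i - N j| := Int.one_le_abs (sub_ne_zero.mpr hNij)
      have h3 : ((1:ℤ):ℝ) ≤ ((|N i - N j| : ℤ) : ℝ) := by exact_mod_cast h2
      rwa [Int.cast_abs, Int.cast_sub, Int.cast_one] at h3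
    have hcd : u ≤ |c i - c j| := by
      rw [hcN i, hcN j, ← sub_mul, abs_mul, abs_of_pos hu0]
      linarith [mul_le_mul_of_nonneg_right habs1 hu0.le]
    have herr : |(c i - c j) - (a i - a j)| ≤ u^2/8 + u^2/8 := by
      have e1 : (c i - c j) - (a i - a j) = -(a i - c i) + (a j - c j) := by ring
      rw [e1]
      calc |-(a i - c i) + (a j - c j)| ≤ |-(a i - c i)| + |a j - c j| := abs_add_le _ _
        _ ≤ u^2/8 + u^2/8 := by rw [abs_neg]; exact add_le_add (haε i) (haε j)
    have hlow := abs_sub_abs_le_abs_sub (c i - c j) ((c i - c j) - (a i - a j))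
    rw [sub_sub_cancel] at hlow
    rw [hq_eq]
    linarith [hcd, herr, hlow, hsq, hu0.le]
  have part5 : ∀ i, 1/(4*((k:ℝ)+1)^2) ≤ |a i + ∑ j, a j| := by
    intro i
    have hik := i.isLt
    have hMne : N i + (if Odd k then (1:ℤ) else 0) ≠ 0 := by
      simp only [hN_def]
      by_cases hod : Odd k
      · have hk2 := Nat.odd_iff.mp hod
        rw [if_pos hod]
        by_cases hmid : (i:ℕ)+1 = (k+1)/2
        · rw [if_pos ⟨hod, hmid⟩]; omega
        · rw [if_neg (fun h => hmid h.2)]; omega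
      · have hk2 := Nat.even_iff.mp (Nat.not_odd_iff_even.mp hod)
        rw [if_neg hod, if_neg (fun h => hod h.1)]
        omega
    have habs1 : (1:ℝ) ≤ |((N i + (if Odd k then (1:ℤ) else 0) : ℤ) : ℝ)| := by
      have h2 : (1:ℤ) ≤ |N i + (if Odd k then (1:ℤ) else 0)| := Int.one_le_abs hMne
      exact_mod_cast h2
    have hcS : c i + ∑ j, c j = ((N i + (if Odd k then (1:ℤ) else 0) : ℤ) : ℝ) * u := by
      rw [hcN i, hSc]
      push_cast
      ring
    have hlow := abs_sub_abs_le_abs_sub (c i + ∑ j, c j) ((c i + ∑ j, c j) - (a i + ∑ j, a j))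
    rw [sub_sub_cancel] at hlow
    have herr : |(c i + ∑ j, c j) - (a i + ∑ j, a j)| ≤ u^2/8 + (k:ℝ)*(u^2/8) := by
      have e1 : (c i + ∑ j, c j) - (a i + ∑ j, a j)
          = -(a i - c i) + -(∑ j, a j - ∑ j, c j) := by ring
      rw [e1]
      calc |-(a i - c i) + -(∑ j, a j - ∑ j, c j)|
          ≤ |-(a i - c i)| + |-(∑ j, a j - ∑ j, c j)| := abs_add_le _ _
        _ ≤ u^2/8 + (k:ℝ)*(u^2/8) := by
            rw [abs_neg, abs_neg]; exact add_le_add (haε i) hsum_err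
    have hbig : u ≤ |c i + ∑ j, c j| := by
      rw [hcS, abs_mul, abs_of_pos hu0]
      linarith [mul_le_mul_of_nonneg_right habs1 hu0.le]
    rw [hq_eq]
    linarith [hlow, herr, hbig, hker, hsq, hu0.le]
  have part6 : ((k : ℝ) + 1) / 5 ≤ (({j | 1/4 ≤ a j} : Set (Fin k)).ncard : ℝ) := by
    by_cases hk1 : k = 1
    · subst hk1
      have hc0 : c 0 = 1/2 := by
        rw [hc 0, if_pos ⟨odd_one, by decide⟩]
        norm_num
      have hmem : (0 : Fin 1) ∈ {j : Fin 1 | 1/4 ≤ a j} := by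
        have hlb := (ha 0).1
        rw [hα 0, hc0] at hlb
        simp only [Set.mem_setOf_eq]
        norm_num at hlb ⊢
        linarith
      have hpos : 0 < ({j : Fin 1 | 1/4 ≤ a j}).ncard :=
        (Set.ncard_pos (Set.toFinite _)).mpr ⟨0, hmem⟩
      have : (1:ℝ) ≤ (({j : Fin 1 | 1/4 ≤ a j}).ncard : ℝ) := by exact_mod_cast hpos
      norm_num
      linarith
    · have hk2' : 2 ≤ k := by omega
      set m := (5*(k+1))/8 with hm_def
      have hm1 : m < k := by omega
      have hsubset : ∀ i : Fin k, m ≤ (i:ℕ) → 1/4 ≤ a i := by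
        intro i hmi
        have hik := i.isLt
        have hnotmid : ¬(Odd k ∧ (i:ℕ)+1 = (k+1)/2) := by
          rintro ⟨hod, hmid⟩
          have hk2 := Nat.odd_iff.mp hod
          omega
        have hci : c i = 2*(((i:ℕ):ℝ)+1)/((k:ℝ)+1) - 1 := by rw [hc i, if_neg hnotmid]
        have hia : (5*((k:ℝ)+1)+1) ≤ 8*(((i:ℕ):ℝ)+1) := by
          have h5 : 5*(k+1)+1 ≤ 8*((i:ℕ)+1) := by omega
          exact_mod_cast h5
        have hlb := (ha i).1
        rw [hα i, hε_eq, hci] at hlb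
        rw [div_eq_mul_inv, ← hu_def] at hlb
        linarith [hlb, mul_le_mul_of_nonneg_right hia hu0.le, hu1, hsq, hu0.le]
      classical
      set S : Finset (Fin k) := (Finset.Ico m k).attachFin
        (fun x hx => (Finset.mem_Ico.mp hx).2) with hS_def
      have hcard : S.card = k - m := by
        rw [hS_def, Finset.card_attachFin, Nat.card_Ico]
      have hsub : (S : Set (Fin k)) ⊆ {j | 1/4 ≤ a j} := by
        intro i hi
        simp only [hS_def, Finset.coe_sort_coe, Finset.mem_coe, Finset.mem_attachFin,
          Finset.mem_Ico] at hi
        exact hsubset i hi.1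
      have hle : S.card ≤ ({j | 1/4 ≤ a j} : Set (Fin k)).ncard := by
        have h2 := Set.ncard_le_ncard hsub (Set.toFinite _)
        rwa [Set.ncard_coe_finset] at h2
      have hnum : k + 1 ≤ 5 * (k - m) := by omega
      have h3 : ((k:ℝ)+1) ≤ 5*(((k - m : ℕ)):ℝ) := by exact_mod_cast hnum
      have h4 : ((S.card : ℕ):ℝ) ≤ (({j | 1/4 ≤ a j} : Set (Fin k)).ncard : ℝ) := by
        exact_mod_cast hle
      rw [hcard] at h4
      linarith
  exact ⟨part1, part2, part3, part4, part5, part6⟩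
end

section
/- For the code C obtained from the unit group construction: if x, y ∈ Γ ∩ cB(t) are distinct codeword preimages, and z = y⁻¹x − 1 ∈ 𝒪 is nonzero, then the absolute norm satisfies N(z) ≥ q^{N − d_R(C)}, where d_R is the sum-rank distance between Θ(x) and Θ(y). In simplified algebraic form: if z ∈ 𝒪 is nonzero with z𝒪 ⊆ 𝒪, and for each 𝔭 ∈ S the rank of ι_𝔭(z) is r_𝔭, then |𝒪/z𝒪| ≥ Π_{𝔭 ∈ S} q₀^{d(d − r_𝔭)}. -/
open NumberField

theorem aux_card_quot {K : Type*} [Field K] [Fintype K] {d : ℕ}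
    (B : Matrix (Fin d) (Fin d) K) :
    Nat.card (Matrix (Fin d) (Fin d) K ⧸ (AddMonoidHom.mulLeft B).range) =
      Fintype.card K ^ (d * (d - B.rank)) := by
  classical
  set q := Fintype.card K with hq
  set R := LinearMap.range B.mulVecLin with hR
  have hrle : B.rank ≤ d := B.rank_le_width
  have hcardR : Nat.card R = q ^ B.rank := by
    haveI : Fintype R := Fintype.ofFinite _
    rw [Nat.card_eq_fintype_card]
    exact Module.card_eq_pow_finrank
  set J := (AddMonoidHom.mulLeft B).range with hJ
  have hcardJ : Nat.card J = q ^ (B.rank * d) := by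
    have hbij : Function.Bijective
        (fun (n : J) (j : Fin d) => (⟨fun i => (n : Matrix (Fin d) (Fin d) K) i j, by
          obtain ⟨m, hm⟩ := n.2
          exact ⟨fun k => m k j, by
            ext i
            simp [← hm, Matrix.mulVecLin_apply, Matrix.mulVec, Matrix.mul_apply,
              dotProduct, AddMonoidHom.mulLeft]⟩⟩ : R)) := by
      constructor
      · intro n₁ n₂ h
        apply Subtype.ext
        ext i j
        exact congrFun (congrArg Subtype.val (congrFun h j)) i
      · intro f
        choose v hv using fun j => (f j).2
        refine ⟨⟨B * Matrix.of (fun k j => v j k), ⟨_, rfl⟩⟩, ?_⟩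
        funext j
        ext i
        have := congrFun (hv j) i
        simp [Matrix.mulVecLin_apply, Matrix.mulVec, Matrix.mul_apply, dotProduct] at this ⊢
        rw [← this]
    rw [Nat.card_eq_of_bijective _ hbij, Nat.card_pi, Finset.prod_const, hcardR,
      Finset.card_univ, Fintype.card_fin, ← pow_mul]
  have hM : Nat.card (Matrix (Fin d) (Fin d) K) = q ^ (d * d) := by
    rw [Nat.card_eq_of_bijective _ (Matrix.of (m := Fin d) (n := Fin d) (α := K)).symm.bijective,
      Nat.card_pi]
    simp [Nat.card_pi, Finset.prod_const, ← pow_mul]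
    rfl
  have key : Nat.card (Matrix (Fin d) (Fin d) K ⧸ J) * Nat.card J
      = Nat.card (Matrix (Fin d) (Fin d) K) := J.index_mul_card
  rw [hcardJ, hM] at key
  have hqpos : 0 < q := Fintype.card_pos
  have : q ^ (d * (d - B.rank)) * q ^ (B.rank * d) = q ^ (d * d) := by
    rw [← pow_add]
    congr 1
    rw [mul_comm B.rank d, ← Nat.mul_add, Nat.sub_add_cancel hrle]
  exact Nat.eq_of_mul_eq_mul_right (pow_pos hqpos _) (key.trans this.symm)

/-- simplified algebraic form: `A` is a central division algebra
of degree `d` over a number field `F`, `𝒪` a maximal order, `S` a finite set of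
primes of `𝓞 F` unramified in `A` with residue field `F_{q₀}`, with fixed
isomorphisms `ι_𝔭 : 𝒪/𝔭𝒪 ≅ M_d(F_{q₀})` (encoded as surjective ring
homomorphisms with kernel `𝔭𝒪`).  If `z ∈ 𝒪` is nonzero and for each `𝔭 ∈ S`
the rank of `ι_𝔭(z)` is `r_𝔭`, then `|𝒪/z𝒪| ≥ ∏_{𝔭 ∈ S} q₀^(d(d - r_𝔭))`. -/
theorem stmt_17
    (F : Type*) [Field F] [NumberField F]
    (A : Type*) [DivisionRing A] [Algebra F A] [Algebra.IsCentral F A]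
    [Algebra (𝓞 F) A] [IsScalarTower (𝓞 F) F A]
    (d : ℕ) (hd : 2 ≤ d) (hdim : Module.finrank F A = d ^ 2)
    (𝒪 : Subring A)
    (hstab : ∀ (p : 𝓞 F), ∀ y ∈ 𝒪, p • y ∈ 𝒪)
    (hfg : (AddSubgroup.toIntSubmodule 𝒪.toAddSubgroup).FG)
    (hspan : Submodule.span F (𝒪 : Set A) = ⊤)
    (hmax : ∀ 𝒪' : Subring A, (AddSubgroup.toIntSubmodule 𝒪'.toAddSubgroup).FG →
      Submodule.span F (𝒪' : Set A) = ⊤ → 𝒪 ≤ 𝒪' → 𝒪' = 𝒪)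
    (q₀ : ℕ) (Fq₀ : Type*) [Field Fq₀] [Fintype Fq₀] (hq₀ : Fintype.card Fq₀ = q₀)
    (S : Finset (Ideal (𝓞 F))) (hS : ∀ 𝔭 ∈ S, 𝔭.IsPrime)
    (P : Ideal (𝓞 F) → AddSubgroup 𝒪)
    (hP : ∀ 𝔭, P 𝔭 = AddSubgroup.closure {w : 𝒪 | ∃ p ∈ 𝔭, ∃ y : 𝒪, (w : A) = p • (y : A)})
    (ι : Ideal (𝓞 F) → (𝒪 →+* Matrix (Fin d) (Fin d) Fq₀))
    (hsurj : ∀ 𝔭 ∈ S, Function.Surjective (ι 𝔭))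
    (hker : ∀ 𝔭 ∈ S, ∀ w : 𝒪, ι 𝔭 w = 0 ↔ w ∈ P 𝔭)
    (z : 𝒪) (hz : z ≠ 0)
    (r : Ideal (𝓞 F) → ℕ) (hr : ∀ 𝔭 ∈ S, (ι 𝔭 z).rank = r 𝔭)
    (z𝒪 : AddSubgroup 𝒪)
    (hz𝒪 : z𝒪 = AddSubgroup.closure {w : 𝒪 | ∃ y : 𝒪, w = z * y}) :
    (∏ 𝔭 ∈ S, q₀ ^ (d * (d - r 𝔭))) ≤ Nat.card (𝒪 ⧸ z𝒪) := by
  classical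
  -- 𝒪 is infinite
  haveI : CharZero A :=
    charZero_of_injective_algebraMap (algebraMap F A).injective
  haveI : CharZero 𝒪 := ⟨fun a b h => by
    have : ((a : 𝒪) : A) = ((b : 𝒪) : A) := congrArg Subtype.val h
    push_cast at this
    exact_mod_cast this⟩
  haveI : Infinite 𝒪 := inferInstance
  -- membership of p • 1 in kernels
  have key0 : ∀ (p : 𝓞 F) (𝔭 : Ideal (𝓞 F)), 𝔭 ∈ S → p ∈ 𝔭 →
      ι 𝔭 ⟨p • (1 : A), hstab p 1 𝒪.one_mem⟩ = 0 := by
    intro p 𝔭 h𝔭 hp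
    rw [hker 𝔭 h𝔭, hP]
    exact AddSubgroup.subset_closure ⟨p, hp, 1, rfl⟩
  -- each 𝔭 ∈ S is maximal
  have hmaxS : ∀ 𝔭 ∈ S, Ideal.IsMaximal 𝔭 := by
    intro 𝔭 h𝔭
    refine (hS 𝔭 h𝔭).isMaximal ?_
    rintro rfl
    have hinj : Function.Injective (ι ⊥) := by
      intro a b hab
      have h0 : ι ⊥ (a - b) = 0 := by rw [map_sub, hab, sub_self]
      have hm := (hker ⊥ h𝔭 _).mp h0
      rw [hP] at hm
      have hsub : {w : 𝒪 | ∃ p ∈ (⊥ : Ideal (𝓞 F)), ∃ y : 𝒪, (w : A) = p • (y : A)}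
          ⊆ (↑(⊥ : AddSubgroup 𝒪) : Set 𝒪) := by
        rintro w ⟨p, hp, y, hw⟩
        rw [Ideal.mem_bot] at hp
        subst hp
        have : (w : A) = 0 := by simpa using hw
        simpa [AddSubgroup.mem_bot] using Subtype.ext this
      have := (AddSubgroup.closure_le _).mpr hsub hm
      rw [AddSubgroup.mem_bot, sub_eq_zero] at this
      exact this
    haveI : Finite 𝒪 := Finite.of_injective _ hinj
    exact not_finite 𝒪
  -- pairwise separating elements
  have pairwise : ∀ 𝔭 ∈ S, ∀ 𝔮 ∈ S, 𝔭 ≠ 𝔮 → ∃ u : 𝒪, ι 𝔭 u = 1 ∧ ι 𝔮 u = 0 := by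
    intro 𝔭 h𝔭 𝔮 h𝔮 hne
    have hsup : 𝔭 ⊔ 𝔮 = ⊤ := (hmaxS 𝔭 h𝔭).coprime_of_ne (hmaxS 𝔮 h𝔮) hne
    have h1 : (1 : 𝓞 F) ∈ 𝔭 ⊔ 𝔮 := by rw [hsup]; trivial
    obtain ⟨a, ha, b, hb, hab⟩ := Submodule.mem_sup.mp h1
    refine ⟨⟨b • (1 : A), hstab b 1 𝒪.one_mem⟩, ?_, key0 b 𝔮 h𝔮 hb⟩
    have hrepr : (⟨b • (1 : A), hstab b 1 𝒪.one_mem⟩ : 𝒪)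
        = 1 - ⟨a • (1 : A), hstab a 1 𝒪.one_mem⟩ := by
      apply Subtype.ext
      have : a + b = (1 : 𝓞 F) := hab
      calc (b • (1 : A)) = (a + b) • (1 : A) - a • (1 : A) := by
            rw [add_smul]; abel
        _ = 1 - a • (1 : A) := by rw [this, one_smul]
    rw [hrepr, map_sub, map_one, key0 a 𝔭 h𝔭 ha, sub_zero]
  -- idempotent-like elements
  have idem : ∀ (T : Finset (Ideal (𝓞 F))), T ⊆ S → ∀ 𝔭 ∈ S, 𝔭 ∉ T →
      ∃ c : 𝒪, ι 𝔭 c = 1 ∧ ∀ 𝔮 ∈ T, ι 𝔮 c = 0 := by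
    intro T
    induction T using Finset.induction with
    | empty => exact fun _ 𝔭 h𝔭 _ => ⟨1, map_one _, by simp⟩
    | @insert 𝔮₀ T h𝔮₀ ih =>
      intro hsub 𝔭 h𝔭 hnot
      obtain ⟨c, hc1, hc0⟩ := ih (fun x hx => hsub (Finset.mem_insert_of_mem hx)) 𝔭 h𝔭
        (fun hx => hnot (Finset.mem_insert_of_mem hx))
      obtain ⟨u, hu1, hu0⟩ := pairwise 𝔭 h𝔭 𝔮₀ (hsub (Finset.mem_insert_self _ _))
        (fun h => hnot (h ▸ Finset.mem_insert_self _ _))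
      refine ⟨c * u, by rw [map_mul, hc1, hu1, one_mul], ?_⟩
      intro 𝔮 h𝔮
      rcases Finset.mem_insert.mp h𝔮 with rfl | h
      · rw [map_mul, hu0, mul_zero]
      · rw [map_mul, hc0 𝔮 h, zero_mul]
  -- CRT surjectivity
  have crt : ∀ (t : ∀ _ : S, Matrix (Fin d) (Fin d) Fq₀),
      ∃ w : 𝒪, ∀ 𝔭 : S, ι 𝔭 w = t 𝔭 := by
    intro t
    have hc := fun (𝔭 : S) => idem (S.erase 𝔭) (Finset.erase_subset _ _) 𝔭 𝔭.2
      (Finset.notMem_erase _ _)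
    choose c hc1 hc0 using hc
    choose x hx using fun (𝔭 : S) => hsurj 𝔭 𝔭.2 (t 𝔭)
    refine ⟨∑ 𝔭 : S, c 𝔭 * x 𝔭, ?_⟩
    intro 𝔮
    rw [map_sum, Finset.sum_eq_single 𝔮]
    · rw [map_mul, hc1, hx, one_mul]
    · intro 𝔭 _ hne
      rw [map_mul, hc0 𝔭 𝔮 (Finset.mem_erase.mpr ⟨fun h => hne (Subtype.ext h).symm, 𝔮.2⟩),
        zero_mul]
    · intro h
      exact absurd (Finset.mem_univ 𝔮) h
  -- the target quotient groups
  let Mx := Matrix (Fin d) (Fin d) Fq₀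
  let J : S → AddSubgroup Mx := fun 𝔭 => (AddMonoidHom.mulLeft (ι 𝔭 z)).range
  let Ψ : 𝒪 →+ ((𝔭 : S) → Mx ⧸ J 𝔭) :=
    { toFun := fun w 𝔭 => QuotientAddGroup.mk (ι 𝔭 w)
      map_zero' := by
        funext 𝔭
        show QuotientAddGroup.mk (ι (𝔭 : Ideal (𝓞 F)) 0) = 0
        rw [map_zero]
        rfl
      map_add' := by
        intro a b
        funext 𝔭
        show QuotientAddGroup.mk (ι (𝔭 : Ideal (𝓞 F)) (a + b))
          = QuotientAddGroup.mk (ι (𝔭 : Ideal (𝓞 F)) a) + QuotientAddGroup.mk (ι (𝔭 : Ideal (𝓞 F)) b)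
        rw [map_add]
        rfl }
  have hΨsurj : Function.Surjective Ψ := by
    intro t
    choose m hm using fun 𝔭 : S => QuotientAddGroup.mk_surjective (t 𝔭)
    obtain ⟨w, hw⟩ := crt m
    refine ⟨w, funext fun 𝔭 => ?_⟩
    show QuotientAddGroup.mk (ι (𝔭 : Ideal (𝓞 F)) w) = t 𝔭
    rw [hw 𝔭, hm 𝔭]
  have hker' : ∀ x ∈ z𝒪, Ψ x = 0 := by
    intro x hx
    rw [hz𝒪] at hx
    have hle : AddSubgroup.closure {w : 𝒪 | ∃ y : 𝒪, w = z * y} ≤ Ψ.ker := by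
      rw [AddSubgroup.closure_le]
      rintro w ⟨y, rfl⟩
      show Ψ (z * y) = 0
      funext 𝔭
      show QuotientAddGroup.mk (ι (𝔭 : Ideal (𝓞 F)) (z * y)) = 0
      rw [QuotientAddGroup.eq_zero_iff, map_mul]
      exact ⟨ι (𝔭 : Ideal (𝓞 F)) y, rfl⟩
    exact hle hx
  let Φ := QuotientAddGroup.lift z𝒪 Ψ hker'
  have hΦsurj : Function.Surjective Φ := by
    intro t
    obtain ⟨w, hw⟩ := hΨsurj t
    exact ⟨QuotientAddGroup.mk w, hw⟩
  -- torsion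
  have tors : ∀ w : 𝒪, ∃ k : ℤ, k ≠ 0 ∧ k • w ∈ z𝒪 := by
    intro w
    have hzA : (z : A) ≠ 0 := fun h => hz (Subtype.ext (by simpa using h))
    have hu : (z : A)⁻¹ * (w : A) ∈ Submodule.span F (𝒪 : Set A) := by
      rw [hspan]; trivial
    obtain ⟨n, f, g, hsum⟩ := Submodule.mem_span_set'.mp hu
    haveI : Algebra.IsAlgebraic ℚ F := Algebra.IsAlgebraic.of_finite ℚ F
    have halg : ∀ cc : F, IsAlgebraic ℤ cc := fun cc =>
      (IsFractionRing.isAlgebraic_iff ℤ ℚ F).mpr (Algebra.IsAlgebraic.isAlgebraic cc)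
    have hinj : ∀ x : ℤ, algebraMap ℤ F x = 0 → x = 0 := fun x hx => by
      have : ((x : ℤ) : F) = 0 := by rwa [← map_intCast (algebraMap ℤ F)]
      exact_mod_cast this
    choose ax k hk hmul using (fun i : Fin n => by
      obtain ⟨y, hy, hint⟩ := (halg (f i)).exists_integral_multiple
      exact ⟨⟨y • f i, hint⟩, y, hy, by simp [zsmul_eq_mul]⟩ :
        ∀ i : Fin n, ∃ x : integralClosure ℤ F, ∃ y ≠ (0 : ℤ), algebraMap ℤ F y * f i = x)
    set K : ℤ := ∏ i : Fin n, k i with hKdef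
    have hK : K ≠ 0 := Finset.prod_ne_zero_iff.mpr fun i _ => hk i
    have hterm : ∀ i : Fin n, ∃ b : 𝓞 F, K • ((f i) • ((g i : A))) = b • ((g i : A)) := by
      intro i
      set m : ℤ := ∏ j ∈ Finset.univ.erase i, k j with hm
      refine ⟨((m : 𝓞 F)) * ⟨(ax i : F), (ax i).2⟩, ?_⟩
      have h1 : K • ((f i) • ((g i : A))) = ((K : F) * f i) • ((g i : A)) := by
        rw [← Int.cast_smul_eq_zsmul F K, smul_smul]
      rw [h1]
      have h2 : (K : F) * f i = algebraMap (𝓞 F) F ((m : 𝓞 F) * ⟨(ax i : F), (ax i).2⟩) := by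
        have hKm : K = m * k i := by
          rw [hm, hKdef, Finset.prod_erase_mul _ _ (Finset.mem_univ i)]
        rw [hKm]
        push_cast
        rw [mul_assoc]
        have : (k i : F) * f i = (ax i : F) := by
          rw [← hmul i, eq_intCast]
        rw [this]
        norm_cast
      rw [h2, algebraMap_smul]
    have hmem : K • ((z : A)⁻¹ * (w : A)) ∈ 𝒪 := by
      rw [← hsum, Finset.smul_sum]
      refine sum_mem fun i _ => ?_
      obtain ⟨b, hb⟩ := hterm i
      rw [hb]
      exact hstab b _ (g i).2
    refine ⟨K, hK, ?_⟩
    rw [hz𝒪]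
    refine AddSubgroup.subset_closure ⟨⟨K • ((z : A)⁻¹ * (w : A)), hmem⟩, ?_⟩
    apply Subtype.ext
    push_cast
    rw [mul_smul_comm, mul_inv_cancel_left₀ hzA]
  have tor : AddMonoid.IsTorsion (𝒪 ⧸ z𝒪) := by
    intro x
    obtain ⟨w, rfl⟩ := QuotientAddGroup.mk_surjective x
    obtain ⟨K, hK, hmem⟩ := tors w
    rw [isOfFinAddOrder_iff_zsmul_eq_zero]
    refine ⟨K, hK, ?_⟩
    rw [← QuotientAddGroup.mk_zsmul, QuotientAddGroup.eq_zero_iff]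
    exact hmem
  -- finiteness
  have h1 : 𝒪.toAddSubgroup.FG := by
    have h := (Submodule.fg_iff_addSubgroup_fg _).mp hfg
    rwa [AddSubgroup.toIntSubmodule_toAddSubgroup] at h
  haveI h2 : AddGroup.FG 𝒪 := (AddGroup.fg_iff_addSubgroup_fg _).mpr h1
  haveI hfin : Finite (𝒪 ⧸ z𝒪) := AddCommGroup.finite_of_fg_torsion _ tor
  -- conclude
  calc (∏ 𝔭 ∈ S, q₀ ^ (d * (d - r 𝔭)))
      = Nat.card ((𝔭 : S) → Mx ⧸ J 𝔭) := by
        rw [Nat.card_pi, ← Finset.prod_coe_sort S (fun 𝔭 => q₀ ^ (d * (d - r 𝔭)))]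
        refine Finset.prod_congr rfl fun 𝔭 _ => ?_
        rw [show J 𝔭 = (AddMonoidHom.mulLeft ((ι (𝔭 : Ideal (𝓞 F))) z)).range from rfl,
          aux_card_quot, hq₀, hr _ 𝔭.2]
    _ ≤ Nat.card (𝒪 ⧸ z𝒪) := Nat.card_le_card_of_surjective Φ hΦsurj
end
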